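/- The function (τ₀, V) ↦ ∑_{k=1}^K τ_k·log₂(1 + (γ_k/τ_k)·Tr(h_k h_k^H V)) together with the constraints ∑_{k=0}^K τ_k ≤ 1, τ ≥ 0, V ⪰ 0, Tr(V) ≤ τ₀·P_max defines a convex optimization problem: the feasible set is convex and the objective is concave in (τ₁,…,τ_K, V) jointly. -/

import Mathlib

open Matrix ComplexOrder Real

private lemma logb_concave {z w lam mu : ℝ} (hz : 0 < z) (hw : 0 < w)
    (hl : 0 ≤ lam) (hm : 0 ≤ mu) (hlm : lam + mu = 1) :
    lam * Real.logb 2 z + mu * Real.logb 2 w ≤ Real.logb 2 (lam * z + mu * w) := by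
  have hc := strictConcaveOn_log_Ioi.concaveOn.2 (Set.mem_Ioi.2 hz) (Set.mem_Ioi.2 hw) hl hm hlm
  simp only [smul_eq_mul] at hc
  have h2 : (0:ℝ) < Real.log 2 := Real.log_pos one_lt_two
  unfold Real.logb
  calc lam * (Real.log z / Real.log 2) + mu * (Real.log w / Real.log 2)
      = (lam * Real.log z + mu * Real.log w) / Real.log 2 := by ring
    _ ≤ Real.log (lam * z + mu * w) / Real.log 2 := by gcongr

private lemma boundary {γ a b s t x y : ℝ} (hγ : 0 < γ)
    (ha : 0 ≤ a) (hs : 0 ≤ s) (hx : 0 ≤ x) (hy : 0 ≤ y)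
    (hu0 : a * s = 0) (hbpos : 0 < b) (htpos : 0 < t) :
    a * (s * Real.logb 2 (1 + γ / s * x)) + b * (t * Real.logb 2 (1 + γ / t * y))
      ≤ (a * s + b * t) * Real.logb 2 (1 + γ / (a * s + b * t) * (a * x + b * y)) := by
  have h1 : a * (s * Real.logb 2 (1 + γ / s * x)) = 0 := by
    rcases mul_eq_zero.mp hu0 with h | h <;> simp [h, mul_comm]
  rw [h1, zero_add, hu0, zero_add]
  have hv : 0 < b * t := mul_pos hbpos htpos
  have harg1 : (0:ℝ) < 1 + γ / t * y := by positivity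
  have hle : 1 + γ / t * y ≤ 1 + γ / (b * t) * (a * x + b * y) := by
    have h2 : γ / t * y ≤ γ / (b * t) * (a * x + b * y) := by
      rw [div_mul_eq_mul_div, div_mul_eq_mul_div, div_le_div_iff₀ htpos hv]
      have hax : 0 ≤ a * x := mul_nonneg ha hx
      nlinarith [mul_nonneg (mul_nonneg hγ.le hax) htpos.le]
    linarith
  have := Real.logb_le_logb_of_le (one_lt_two) harg1 hle
  calc b * (t * Real.logb 2 (1 + γ / t * y))
      = (b * t) * Real.logb 2 (1 + γ / t * y) := by ring
    _ ≤ (b * t) * Real.logb 2 (1 + γ / (b * t) * (a * x + b * y)) :=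
        mul_le_mul_of_nonneg_left this hv.le

private lemma key {γ a b s t x y : ℝ} (hγ : 0 < γ)
    (ha : 0 ≤ a) (hb : 0 ≤ b) (hab : a + b = 1)
    (hs : 0 ≤ s) (ht : 0 ≤ t) (hx : 0 ≤ x) (hy : 0 ≤ y) :
    a * (s * Real.logb 2 (1 + γ / s * x)) + b * (t * Real.logb 2 (1 + γ / t * y))
      ≤ (a * s + b * t) * Real.logb 2 (1 + γ / (a * s + b * t) * (a * x + b * y)) := by
  have hu0 : 0 ≤ a * s := mul_nonneg ha hs
  have hv0 : 0 ≤ b * t := mul_nonneg hb ht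
  rcases eq_or_lt_of_le hu0 with hu | hu
  · rcases eq_or_lt_of_le hv0 with hv | hv
    · have h1 : a * (s * Real.logb 2 (1 + γ / s * x)) = 0 := by
        rcases mul_eq_zero.mp hu.symm with h | h <;> simp [h, mul_comm]
      have h2 : b * (t * Real.logb 2 (1 + γ / t * y)) = 0 := by
        rcases mul_eq_zero.mp hv.symm with h | h <;> simp [h, mul_comm]
      rw [h1, h2, ← hu, ← hv]
      simp
    · rcases (mul_pos_iff.mp hv) with ⟨hb', ht'⟩ | ⟨hb', _⟩
      · exact boundary hγ ha hs hx hy hu.symm hb' ht'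
      · exact absurd hb' (not_lt.mpr hb)
  · rcases eq_or_lt_of_le hv0 with hv | hv
    · obtain ⟨ha', hs'⟩ := (mul_pos_iff.mp hu).resolve_right (fun ⟨h1,_⟩ => absurd h1 (not_lt.mpr ha))
      have hkey := boundary hγ hb ht hy hx hv.symm ha' hs'
      rw [show b * t + a * s = a * s + b * t from add_comm _ _,
        show b * y + a * x = a * x + b * y from add_comm _ _] at hkey
      linarith
    · -- main case
      obtain ⟨ha', hs'⟩ := (mul_pos_iff.mp hu).resolve_right (fun ⟨h1,_⟩ => absurd h1 (not_lt.mpr ha))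
      obtain ⟨hb', ht'⟩ := (mul_pos_iff.mp hv).resolve_right (fun ⟨h1,_⟩ => absurd h1 (not_lt.mpr hb))
      set u := a * s
      set v := b * t
      have huv : 0 < u + v := by linarith
      have hz : (0:ℝ) < 1 + γ / s * x := by positivity
      have hw : (0:ℝ) < 1 + γ / t * y := by positivity
      have hlm : u / (u + v) + v / (u + v) = 1 := by field_simp
      have hcomb : u / (u + v) * (1 + γ / s * x) + v / (u + v) * (1 + γ / t * y)
          = 1 + γ / (u + v) * (a * x + b * y) := by
        field_simp
        ring
      have hc := logb_concave hz hw (by positivity) (by positivity) hlm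
      rw [hcomb] at hc
      have := mul_le_mul_of_nonneg_left hc huv.le
      calc a * (s * Real.logb 2 (1 + γ / s * x)) + b * (t * Real.logb 2 (1 + γ / t * y))
          = (u + v) * (u / (u + v) * Real.logb 2 (1 + γ / s * x)
              + v / (u + v) * Real.logb 2 (1 + γ / t * y)) := by
            field_simp; ring
        _ ≤ _ := this

private lemma quad_comb {N : ℕ} (a b : ℝ) (A B : Matrix (Fin N) (Fin N) ℂ) (v : Fin N → ℂ) :
    (star v ⬝ᵥ ((a • A + b • B) *ᵥ v)) = a • (star v ⬝ᵥ (A *ᵥ v)) + b • (star v ⬝ᵥ (B *ᵥ v)) := by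
  simp [add_mulVec, smul_mulVec, dotProduct_add, dotProduct_smul]

private lemma psd_re {N : ℕ} {A : Matrix (Fin N) (Fin N) ℂ} (hA : A.PosSemidef)
    (v : Fin N → ℂ) : 0 ≤ (star v ⬝ᵥ (A *ᵥ v)).re := by
  have := hA.dotProduct_mulVec_nonneg v
  rw [Complex.le_def] at this
  simpa using this.1

private lemma psd_comb {N : ℕ} {a b : ℝ} (ha : 0 ≤ a) (hb : 0 ≤ b)
    {A B : Matrix (Fin N) (Fin N) ℂ} (hA : A.PosSemidef) (hB : B.PosSemidef) :
    (a • A + b • B).PosSemidef := by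
  refine posSemidef_iff_dotProduct_mulVec.mpr ⟨?_, ?_⟩
  · unfold Matrix.IsHermitian
    rw [conjTranspose_add, conjTranspose_smul, conjTranspose_smul, hA.1, hB.1,
      star_trivial, star_trivial]
  · intro v
    rw [quad_comb, Complex.le_def]
    have h1 := Complex.le_def.mp (hA.dotProduct_mulVec_nonneg v)
    have h2 := Complex.le_def.mp (hB.dotProduct_mulVec_nonneg v)
    simp only [Complex.add_re, Complex.add_im, Complex.smul_re, Complex.smul_im,
      Complex.zero_re, Complex.zero_im, smul_eq_mul] at *
    constructor
    · exact add_nonneg (mul_nonneg ha h1.1) (mul_nonneg hb h2.1)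
    · rw [← h1.2, ← h2.2]; ring

open Matrix ComplexOrder in
theorem stmt_17 (N K : ℕ) (h : Fin K → (Fin N → ℂ)) (γ : Fin K → ℝ)
    (hγ : ∀ k, 0 < γ k) (P : ℝ) (hP : 0 < P) :
    Convex ℝ {p : (Fin (K+1) → ℝ) × Matrix (Fin N) (Fin N) ℂ |
        (∀ i, 0 ≤ p.1 i) ∧ (∑ i, p.1 i) ≤ 1 ∧ p.2.PosSemidef ∧
        p.2.trace.re ≤ p.1 0 * P} ∧
    ConcaveOn ℝ {p : (Fin (K+1) → ℝ) × Matrix (Fin N) (Fin N) ℂ |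
        (∀ i, 0 ≤ p.1 i) ∧ (∑ i, p.1 i) ≤ 1 ∧ p.2.PosSemidef ∧
        p.2.trace.re ≤ p.1 0 * P}
      (fun p => ∑ k : Fin K, p.1 k.succ *
        Real.logb 2 (1 + γ k / p.1 k.succ * (star (h k) ⬝ᵥ (p.2 *ᵥ h k)).re)) := by
  have hconv : Convex ℝ {p : (Fin (K+1) → ℝ) × Matrix (Fin N) (Fin N) ℂ |
        (∀ i, 0 ≤ p.1 i) ∧ (∑ i, p.1 i) ≤ 1 ∧ p.2.PosSemidef ∧
        p.2.trace.re ≤ p.1 0 * P} := by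
    rintro p ⟨hp1, hp2, hp3, hp4⟩ q ⟨hq1, hq2, hq3, hq4⟩ a b ha hb hab
    have hfst : ∀ i, (a • p + b • q).1 i = a * p.1 i + b * q.1 i := by
      intro i; simp [Prod.smul_fst, Prod.fst_add, smul_eq_mul]
    refine ⟨fun i => ?_, ?_, ?_, ?_⟩
    · rw [hfst]
      exact add_nonneg (mul_nonneg ha (hp1 i)) (mul_nonneg hb (hq1 i))
    · simp only [hfst]
      rw [Finset.sum_add_distrib, ← Finset.mul_sum, ← Finset.mul_sum]
      calc a * ∑ i, p.1 i + b * ∑ i, q.1 i ≤ a * 1 + b * 1 := by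
            exact add_le_add (mul_le_mul_of_nonneg_left hp2 ha)
              (mul_le_mul_of_nonneg_left hq2 hb)
        _ = 1 := by rw [mul_one, mul_one, hab]
    · exact psd_comb ha hb hp3 hq3
    · have : (a • p + b • q).2 = a • p.2 + b • q.2 := rfl
      rw [this, hfst, trace_add, trace_smul, trace_smul, Complex.add_re,
        Complex.smul_re, Complex.smul_re, smul_eq_mul, smul_eq_mul]
      calc a * p.2.trace.re + b * q.2.trace.re
          ≤ a * (p.1 0 * P) + b * (q.1 0 * P) :=
            add_le_add (mul_le_mul_of_nonneg_left hp4 ha)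
              (mul_le_mul_of_nonneg_left hq4 hb)
        _ = (a * p.1 0 + b * q.1 0) * P := by ring
  refine ⟨hconv, hconv, ?_⟩
  rintro p ⟨hp1, _, hp3, _⟩ q ⟨hq1, _, hq3, _⟩ a b ha hb hab
  simp only [smul_eq_mul]
  rw [Finset.mul_sum, Finset.mul_sum, ← Finset.sum_add_distrib]
  apply Finset.sum_le_sum
  intro k _
  have hfst : (a • p + b • q).1 k.succ = a * p.1 k.succ + b * q.1 k.succ := by
    simp [Prod.smul_fst, Prod.fst_add, smul_eq_mul]
  have hsnd : (a • p + b • q).2 = a • p.2 + b • q.2 := rfl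
  have hquad : (star (h k) ⬝ᵥ ((a • p + b • q).2 *ᵥ h k)).re
      = a * (star (h k) ⬝ᵥ (p.2 *ᵥ h k)).re + b * (star (h k) ⬝ᵥ (q.2 *ᵥ h k)).re := by
    rw [hsnd, quad_comb]
    simp [Complex.add_re, Complex.smul_re]
  rw [hfst, hquad]
  calc a * (p.1 k.succ * Real.logb 2 (1 + γ k / p.1 k.succ * (star (h k) ⬝ᵥ (p.2 *ᵥ h k)).re))
        + b * (q.1 k.succ * Real.logb 2 (1 + γ k / q.1 k.succ * (star (h k) ⬝ᵥ (q.2 *ᵥ h k)).re))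
      ≤ _ := key (hγ k) ha hb hab (hp1 k.succ) (hq1 k.succ) (psd_re hp3 (h k)) (psd_re hq3 (h k))
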